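/- The constructions † ↦ Tr_† and Tr ↦ †_Tr are mutually inverse: for a guarded Conway category (C, ▷, †), the dagger induced by Tr_† equals †; and for a guarded traced cartesian category (C, ▷, Tr), the trace induced by †_Tr equals Tr. -/

import Mathlib

open CategoryTheory CategoryTheory.Limits

/-- The trace induced by a guarded dagger:
`Tr^X_{A,B}(f) = π_r ∘ f ∘ (p_X × id_A) ∘ ⟨(π_ℓ ∘ f)†, id_A⟩`. -/
noncomputable def TrD {C : Type*} [Category C] [HasFiniteProducts C]
    (F : C ⥤ C) (p : 𝟭 C ⟶ F)
    (dag : ∀ {X Y : C}, (F.obj X ⨯ Y ⟶ X) → (Y ⟶ X))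
    {X A B : C} (f : F.obj X ⨯ A ⟶ X ⨯ B) : A ⟶ B :=
  prod.lift (dag (f ≫ prod.fst)) (𝟙 A) ≫ prod.map (p.app X) (𝟙 A) ≫ f ≫ prod.snd

/-- The dagger induced by a guarded trace: `f^{†_Tr} = Tr^X_{A,X}⟨f, f⟩`. -/
noncomputable def dagT {C : Type*} [Category C] [HasFiniteProducts C]
    (F : C ⥤ C)
    (Tr : ∀ {X A B : C}, (F.obj X ⨯ A ⟶ X ⨯ B) → (A ⟶ B))
    {X A : C} (f : F.obj X ⨯ A ⟶ X) : A ⟶ X :=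
  Tr (prod.lift f f)

set_option maxHeartbeats 1000000

/-- The constructions `† ↦ Tr_†` and `Tr ↦ †_Tr` are mutually inverse: for a guarded
Conway dagger `†`, the dagger induced by `Tr_†` is `†`; for a guarded trace `Tr`, the
trace induced by `†_Tr` is `Tr`. -/
theorem stmt15 {C : Type*} [Category C] [HasFiniteProducts C]
    (F : C ⥤ C) (p : 𝟭 C ⟶ F) :
    (∀ dag : ∀ {X Y : C}, (F.obj X ⨯ Y ⟶ X) → (Y ⟶ X),
      (∀ {X Y : C} (f : F.obj X ⨯ Y ⟶ X),
        dag f = prod.lift (dag f) (𝟙 Y) ≫ prod.map (p.app X) (𝟙 Y) ≫ f) →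
      (∀ {X Y Z : C} (f : F.obj X ⨯ Y ⟶ X) (h : Z ⟶ Y),
        h ≫ dag f = dag (prod.map (𝟙 (F.obj X)) h ≫ f)) →
      (∀ {X Y Z : C} (f : F.obj X ⨯ Y ⟶ Z) (g : Z ⟶ X),
        dag (f ≫ g) = dag (prod.map (F.map g) (𝟙 Y) ≫ f) ≫ g) →
      (∀ {X Y : C} (f : F.obj X ⨯ (F.obj X ⨯ Y) ⟶ X),
        dag (dag f) =
          dag (prod.lift (prod.fst : F.obj X ⨯ Y ⟶ F.obj X) (𝟙 (F.obj X ⨯ Y)) ≫ f)) →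
      ∀ {X A : C} (f : F.obj X ⨯ A ⟶ X),
        dagT F (TrD F p @dag) f = dag f) ∧
    (∀ Tr : ∀ {X A B : C}, (F.obj X ⨯ A ⟶ X ⨯ B) → (A ⟶ B),
      (∀ {X A A' B : C} (f : F.obj X ⨯ A ⟶ X ⨯ B) (g : A' ⟶ A),
        Tr (prod.map (𝟙 (F.obj X)) g ≫ f) = g ≫ Tr f) →
      (∀ {X A B B' : C} (f : F.obj X ⨯ A ⟶ X ⨯ B) (g : B ⟶ B'),
        Tr (f ≫ prod.map (𝟙 X) g) = Tr f ≫ g) →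
      (∀ {X X' A B : C} (f : F.obj X ⨯ A ⟶ X' ⨯ B) (g : X' ⟶ X),
        Tr (f ≫ prod.map g (𝟙 B)) = Tr (prod.map (F.map g) (𝟙 A) ≫ f)) →
      (∀ {A B : C} (f : F.obj (⊤_ C) ⨯ A ⟶ (⊤_ C) ⨯ B),
        Tr f = prod.lift (terminal.from A ≫ p.app (⊤_ C)) (𝟙 A) ≫ f ≫ prod.snd) →
      (∀ {X Y A B : C} (f : F.obj X ⨯ (F.obj Y ⨯ A) ⟶ X ⨯ (Y ⨯ B)),
        Tr (Tr f) =
          Tr (prod.map (prod.lift (F.map prod.fst) (F.map prod.snd)) (𝟙 A) ≫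
            (prod.associator (F.obj X) (F.obj Y) A).hom ≫ f ≫
            (prod.associator X Y B).inv)) →
      (∀ {X A B D : C} (f : F.obj X ⨯ A ⟶ X ⨯ B),
        Tr ((prod.associator (F.obj X) A D).inv ≫ prod.map f (𝟙 D) ≫
            (prod.associator X B D).hom)
          = prod.map (Tr f) (𝟙 D)) →
      (∀ X : C,
        Tr (prod.lift (prod.snd : F.obj X ⨯ X ⟶ X) prod.fst) = p.app X) →
      ∀ {X A B : C} (f : F.obj X ⨯ A ⟶ X ⨯ B),
        TrD F p (dagT F @Tr) f = Tr f) := by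
  constructor
  · intro dag fix _ _ _ X A f
    simp only [dagT, TrD, prod.lift_fst, prod.lift_snd]
    exact (fix f).symm
  · intro Tr natL natR slide vanI vanII superp yank X A B f
    set f₁ : F.obj X ⨯ A ⟶ X := f ≫ prod.fst with hf₁
    set h : A ⟶ X := Tr (prod.lift f₁ f₁) with hh
    -- L3 : Tr ⟨π₂, 𝟙⟩ = ⟨p, 𝟙⟩
    have L3 : ∀ W : C,
        Tr (prod.lift (prod.snd : F.obj W ⨯ W ⟶ W) (𝟙 (F.obj W ⨯ W)))
          = prod.lift (p.app W) (𝟙 W) := by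
      intro W
      have s := superp (D := W) (prod.lift (prod.snd : F.obj W ⨯ W ⟶ W) prod.fst)
      rw [yank] at s
      have n := natL ((prod.associator (F.obj W) W W).inv ≫
          prod.map (prod.lift (prod.snd : F.obj W ⨯ W ⟶ W) prod.fst) (𝟙 W) ≫
          (prod.associator W (F.obj W) W).hom) (prod.lift (𝟙 W) (𝟙 W))
      rw [s] at n
      have e1 : prod.map (𝟙 (F.obj W)) (prod.lift (𝟙 W) (𝟙 W)) ≫
          ((prod.associator (F.obj W) W W).inv ≫
            prod.map (prod.lift (prod.snd : F.obj W ⨯ W ⟶ W) prod.fst) (𝟙 W) ≫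
            (prod.associator W (F.obj W) W).hom)
          = prod.lift prod.snd (𝟙 (F.obj W ⨯ W)) := by
        ext <;> simp [prod.comp_lift_assoc, prod.lift_fst, prod.lift_snd, prod.lift_fst_assoc, prod.lift_snd_assoc]
      have e2 : prod.lift (𝟙 W) (𝟙 W) ≫ prod.map (p.app W) (𝟙 W)
          = prod.lift (p.app W) (𝟙 W) := by ext <;> simp
      rw [e1, e2] at n
      exact n
    -- L3' : postcomposed version
    have L3' : ∀ (P B' : C) (m : F.obj P ⨯ P ⟶ B'),
        Tr (prod.lift (prod.snd : F.obj P ⨯ P ⟶ P) m)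
          = prod.lift (p.app P) (𝟙 P) ≫ m := by
      intro P B' m
      have n := natR (prod.lift (prod.snd : F.obj P ⨯ P ⟶ P) (𝟙 (F.obj P ⨯ P))) m
      rw [L3 P] at n
      have e : prod.lift (prod.snd : F.obj P ⨯ P ⟶ P) (𝟙 (F.obj P ⨯ P)) ≫
          prod.map (𝟙 P) m = prod.lift prod.snd m := by ext <;> simp
      rw [e] at n
      exact n
    -- L6 : constant feedback
    have L6 : ∀ (X' P B' : C) (k : P ⟶ X') (n : F.obj X' ⨯ P ⟶ B'),
        Tr (prod.lift ((prod.snd : F.obj X' ⨯ P ⟶ P) ≫ k) n)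
          = prod.lift (k ≫ p.app X') (𝟙 P) ≫ n := by
      intro X' P B' k n
      have e : prod.lift ((prod.snd : F.obj X' ⨯ P ⟶ P) ≫ k) n
          = prod.lift (prod.snd : F.obj X' ⨯ P ⟶ P) n ≫ prod.map k (𝟙 B') := by
        ext <;> simp
      rw [e, slide]
      have e2 : prod.map (F.map k) (𝟙 P) ≫ prod.lift (prod.snd : F.obj X' ⨯ P ⟶ P) n
          = prod.lift (prod.snd : F.obj P ⨯ P ⟶ P) (prod.map (F.map k) (𝟙 P) ≫ n) := by
        ext <;> simp
      rw [e2, L3']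
      have e3 : prod.lift (p.app P) (𝟙 P) ≫ prod.map (F.map k) (𝟙 P)
          = prod.lift (k ≫ p.app X') (𝟙 P) := by
        have hn : p.app P ≫ F.map k = k ≫ p.app X' := by
          simpa using (p.naturality k).symm
        ext <;> simp [hn]
      rw [← Category.assoc, e3]
    -- superposing chain : Tr ⟨f₁, ⟨f₁, π₂⟩⟩ = ⟨h, 𝟙⟩
    have S5 : Tr (prod.lift f₁ (prod.lift f₁ (prod.snd : F.obj X ⨯ A ⟶ A)))
        = prod.lift h (𝟙 A) := by
      have s := superp (D := A) (prod.lift f₁ f₁)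
      have n := natL ((prod.associator (F.obj X) A A).inv ≫
          prod.map (prod.lift f₁ f₁) (𝟙 A) ≫ (prod.associator X X A).hom)
          (prod.lift (𝟙 A) (𝟙 A))
      rw [s] at n
      have e1 : prod.map (𝟙 (F.obj X)) (prod.lift (𝟙 A) (𝟙 A)) ≫
          ((prod.associator (F.obj X) A A).inv ≫
            prod.map (prod.lift f₁ f₁) (𝟙 A) ≫ (prod.associator X X A).hom)
          = prod.lift f₁ (prod.lift f₁ (prod.snd : F.obj X ⨯ A ⟶ A)) := by
        ext <;> simp [prod.comp_lift_assoc, prod.lift_fst, prod.lift_snd, prod.lift_fst_assoc, prod.lift_snd_assoc]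
      have e2 : prod.lift (𝟙 A) (𝟙 A) ≫ prod.map (Tr (prod.lift f₁ f₁)) (𝟙 A)
          = prod.lift h (𝟙 A) := by ext <;> simp [hh]
      rw [e1, e2] at n
      exact n
    have S6 : Tr (prod.lift f₁ (prod.lift (f₁ ≫ p.app X) (prod.snd : F.obj X ⨯ A ⟶ A)))
        = prod.lift (h ≫ p.app X) (𝟙 A) := by
      have n := natR (prod.lift f₁ (prod.lift f₁ (prod.snd : F.obj X ⨯ A ⟶ A)))
          (prod.map (p.app X) (𝟙 A))
      rw [S5] at n
      have e1 : prod.lift f₁ (prod.lift f₁ (prod.snd : F.obj X ⨯ A ⟶ A)) ≫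
          prod.map (𝟙 X) (prod.map (p.app X) (𝟙 A))
          = prod.lift f₁ (prod.lift (f₁ ≫ p.app X) (prod.snd : F.obj X ⨯ A ⟶ A)) := by
        ext <;> simp [prod.comp_lift_assoc]
      have e2 : prod.lift h (𝟙 A) ≫ prod.map (p.app X) (𝟙 A)
          = prod.lift (h ≫ p.app X) (𝟙 A) := by ext <;> simp
      rw [e1, e2] at n
      exact n
    -- the doubled morphism uR
    set nR : F.obj X ⨯ (F.obj X ⨯ A) ⟶ X ⨯ (F.obj X ⨯ A) :=
      prod.lift ((prod.snd : F.obj X ⨯ (F.obj X ⨯ A) ⟶ F.obj X ⨯ A) ≫ f₁)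
        (prod.lift prod.fst (prod.snd ≫ prod.snd)) with hnR
    set uR : F.obj X ⨯ (F.obj X ⨯ A) ⟶ X ⨯ (X ⨯ (F.obj X ⨯ A)) :=
      prod.lift ((prod.snd : F.obj X ⨯ (F.obj X ⨯ A) ⟶ F.obj X ⨯ A) ≫ f₁) nR with huR
    have S2 : Tr uR = prod.lift f₁ (prod.lift (f₁ ≫ p.app X)
        (prod.snd : F.obj X ⨯ A ⟶ A)) := by
      rw [huR, L6]
      ext <;> simp [hnR, prod.comp_lift_assoc, prod.lift_fst, prod.lift_snd, prod.lift_fst_assoc, prod.lift_snd_assoc]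
    have S3 := vanII uR
    rw [S2] at S3
    -- sliding along the diagonal
    set fp : F.obj (X ⨯ X) ⨯ A ⟶ X ⨯ (F.obj X ⨯ A) :=
      prod.lift (prod.lift ((prod.fst : F.obj (X ⨯ X) ⨯ A ⟶ F.obj (X ⨯ X)) ≫
            F.map (prod.snd : X ⨯ X ⟶ X)) prod.snd ≫ f₁)
        (prod.lift ((prod.fst : F.obj (X ⨯ X) ⨯ A ⟶ F.obj (X ⨯ X)) ≫
          F.map (prod.fst : X ⨯ X ⟶ X)) prod.snd) with hfp
    have e4 : prod.map (prod.lift (F.map (prod.fst : X ⨯ X ⟶ X))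
          (F.map (prod.snd : X ⨯ X ⟶ X))) (𝟙 A) ≫
        (prod.associator (F.obj X) (F.obj X) A).hom ≫ uR ≫
        (prod.associator X X (F.obj X ⨯ A)).inv
        = fp ≫ prod.map (prod.lift (𝟙 X) (𝟙 X)) (𝟙 (F.obj X ⨯ A)) := by
      ext <;> simp [huR, hnR, hfp, prod.comp_lift_assoc, prod.lift_fst, prod.lift_snd, prod.lift_fst_assoc, prod.lift_snd_assoc]
    have S4 := slide fp (prod.lift (𝟙 X) (𝟙 X))
    have e5 : prod.map (F.map (prod.lift (𝟙 X) (𝟙 X))) (𝟙 A) ≫ fp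
        = prod.lift f₁ (𝟙 (F.obj X ⨯ A)) := by
      rw [hfp]
      ext <;> simp [prod.comp_lift_assoc, ← Functor.map_comp, prod.lift_fst, prod.lift_snd, prod.lift_fst_assoc, prod.lift_snd_assoc]
    -- main lemma : Tr ⟨f₁, 𝟙⟩ = ⟨h ≫ p, 𝟙⟩
    have main : Tr (prod.lift f₁ (𝟙 (F.obj X ⨯ A))) = prod.lift (h ≫ p.app X) (𝟙 A) := by
      rw [← e5, ← S4, ← e4, ← S3, S6]
    -- conclude
    have Sf : Tr f = Tr (prod.lift f₁ (𝟙 (F.obj X ⨯ A))) ≫ (f ≫ prod.snd) := by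
      have n := natR (prod.lift f₁ (𝟙 (F.obj X ⨯ A))) (f ≫ prod.snd)
      have e : prod.lift f₁ (𝟙 (F.obj X ⨯ A)) ≫ prod.map (𝟙 X) (f ≫ prod.snd) = f := by
        ext <;> simp [hf₁, prod.lift_fst, prod.lift_snd, prod.lift_fst_assoc, prod.lift_snd_assoc]
      rw [e] at n
      exact n
    rw [Sf, main]
    simp only [TrD, dagT, ← hf₁, ← hh]
    simp [prod.lift_map_assoc]
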